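/- Let d ≥ 1 and let i, j be natural numbers with j ≤ d·i and d·i − j even. Then the dimension of the space of semi-invariants of degree i and order j of the binary d-form satisfies γ_d(i,j) = ω_d(i, (d·i−j)/2) − ω_d(i, (d·i−j)/2 − 1); that is, dim_ℂ (W_{i,(d·i−j)/2} ∩ ker D₁) = ω_d(i, (d·i−j)/2) − ω_d(i, (d·i−j−2)/2). -/
import Mathlib

open MvPolynomial Finsupp Submodule

def omegaCount (d n : ℕ) (m : ℤ) : ℕ :=
  ((Finset.Nat.antidiagonalTuple (d + 1) n).filter
    (fun α => (∑ k : Fin (d + 1), (k : ℤ) * (α k : ℤ)) = m)).card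

noncomputable def Wspace (d i N : ℕ) : Submodule ℂ (MvPolynomial (Fin (d + 1)) ℂ) :=
  Submodule.span ℂ { p | ∃ α : Fin (d + 1) →₀ ℕ,
    (∑ k, α k) = i ∧ (∑ k : Fin (d + 1), (k : ℕ) * α k) = N ∧
    p = MvPolynomial.monomial α 1 }

noncomputable def D1 (d : ℕ) :
    Derivation ℂ (MvPolynomial (Fin (d + 1)) ℂ) (MvPolynomial (Fin (d + 1)) ℂ) :=
  MvPolynomial.mkDerivation ℂ (fun k =>
    if _h : 0 < (k : ℕ) then
      ((k : ℕ) : ℂ) •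
        MvPolynomial.X (⟨(k : ℕ) - 1, lt_of_le_of_lt (Nat.sub_le _ _) k.isLt⟩ : Fin (d + 1))
    else 0)

namespace SA

variable {d : ℕ}

/-- The finset of finsupps with given degree and weight. -/
noncomputable def Tset (d i N : ℕ) : Finset (Fin (d + 1) →₀ ℕ) :=
  ((Finset.Nat.antidiagonalTuple (d + 1) i).filter
    (fun α => ∑ k : Fin (d + 1), (k : ℕ) * α k = N)).image
    (Finsupp.equivFunOnFinite.symm)

lemma mem_Tset {i N : ℕ} {α : Fin (d + 1) →₀ ℕ} :
    α ∈ Tset d i N ↔ (∑ k, α k) = i ∧ (∑ k : Fin (d + 1), (k : ℕ) * α k) = N := by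
  simp only [Tset, Finset.mem_image, Finset.mem_filter, Finset.Nat.mem_antidiagonalTuple]
  constructor
  · rintro ⟨f, ⟨h1, h2⟩, rfl⟩
    exact ⟨h1, h2⟩
  · rintro ⟨h1, h2⟩
    exact ⟨α, ⟨h1, h2⟩, by simp⟩

lemma card_Tset_eq (i N : ℕ) : (Tset d i N).card = omegaCount d i (N : ℤ) := by
  rw [Tset, Finset.card_image_of_injective _ (Equiv.injective _), omegaCount]
  congr 1
  apply Finset.filter_congr
  intro x _
  constructor
  · intro h; simp only [eq_iff_iff, ← h]; push_cast; simp
  · intro h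
    have : ((∑ k : Fin (d + 1), (k : ℕ) * x k : ℕ) : ℤ) = (N : ℤ) := by push_cast; exact h
    exact_mod_cast this

lemma omegaCount_neg (d n : ℕ) {m : ℤ} (hm : m < 0) : omegaCount d n m = 0 := by
  rw [omegaCount, Finset.card_eq_zero, Finset.filter_eq_empty_iff]
  intro x _
  intro h
  have : (0 : ℤ) ≤ ∑ k : Fin (d + 1), (k : ℤ) * (x k : ℤ) :=
    Finset.sum_nonneg fun k _ => mul_nonneg (by positivity) (by positivity)
  omega

lemma Wspace_eq (i N : ℕ) :
    Wspace d i N = Submodule.span ℂ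
      (Set.range (fun α : (Tset d i N) => (MvPolynomial.monomial (α : Fin (d+1) →₀ ℕ) (1:ℂ)))) := by
  rw [Wspace]
  congr 1
  ext p
  simp only [Set.mem_setOf_eq, Set.mem_range]
  constructor
  · rintro ⟨α, h1, h2, rfl⟩; exact ⟨⟨α, mem_Tset.2 ⟨h1, h2⟩⟩, rfl⟩
  · rintro ⟨⟨α, hα⟩, rfl⟩; exact ⟨α, (mem_Tset.1 hα).1, (mem_Tset.1 hα).2, rfl⟩

lemma li_mono (i N : ℕ) : LinearIndependent ℂ
    (fun α : (Tset d i N) => (MvPolynomial.monomial (α : Fin (d+1) →₀ ℕ) (1:ℂ))) := by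
  have hb := (MvPolynomial.basisMonomials (Fin (d+1)) ℂ).linearIndependent
  rw [coe_basisMonomials] at hb
  exact hb.comp _ Subtype.val_injective

instance WFD (i N : ℕ) : FiniteDimensional ℂ (Wspace d i N) := by
  rw [Wspace_eq]
  exact FiniteDimensional.span_of_finite ℂ (Set.finite_range _)

lemma finrank_Wspace (i N : ℕ) :
    Module.finrank ℂ (Wspace d i N) = omegaCount d i (N : ℤ) := by
  rw [Wspace_eq, finrank_span_eq_card (li_mono i N), Fintype.card_coe, card_Tset_eq]





noncomputable def Fop (d : ℕ) :
    Derivation ℂ (MvPolynomial (Fin (d + 1)) ℂ) (MvPolynomial (Fin (d + 1)) ℂ) :=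
  MvPolynomial.mkDerivation ℂ (fun k =>
    if h : (k : ℕ) < d then
      ((d - (k : ℕ) : ℕ) : ℂ) • MvPolynomial.X (⟨(k : ℕ) + 1, by omega⟩ : Fin (d + 1))
    else 0)

lemma mono_mem_W {i N : ℕ} {β : Fin (d+1) →₀ ℕ} (h1 : (∑ k, β k) = i)
    (h2 : (∑ k : Fin (d + 1), (k : ℕ) * β k) = N) (c : ℂ) :
    (monomial β c : MvPolynomial (Fin (d+1)) ℂ) ∈ Wspace d i N := by
  have h : (monomial β c : MvPolynomial (Fin (d+1)) ℂ) = c • monomial β 1 := by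
    rw [smul_monomial, smul_eq_mul, mul_one]
  rw [h]
  exact Submodule.smul_mem _ _ (Submodule.subset_span ⟨β, h1, h2, rfl⟩)

noncomputable def shiftedExp (α : Fin (d+1) →₀ ℕ) (k k' : Fin (d+1)) : Fin (d+1) →₀ ℕ :=
  α - Finsupp.single k 1 + Finsupp.single k' 1

lemma shift_sum {α : Fin (d+1) →₀ ℕ} {k k' : Fin (d+1)} (hk : α k ≠ 0) (w : Fin (d+1) → ℕ) :
    (∑ j, w j * (shiftedExp α k k') j) + w k = (∑ j, w j * α j) + w k' := by
  have hpt : ∀ j, (shiftedExp α k k') j + (Finsupp.single k 1) j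
      = α j + (Finsupp.single k' 1) j := by
    intro j
    simp only [shiftedExp, Finsupp.add_apply, Finsupp.tsub_apply, Finsupp.single_apply]
    have e3 : 1 ≤ α k := Nat.one_le_iff_ne_zero.2 hk
    by_cases h1 : k = j
    · subst h1
      simp only [if_pos rfl]
      by_cases h2 : k' = k <;> simp [h2] <;> omega
    · simp only [if_neg h1]
      by_cases h2 : k' = j <;> simp [h2]
  have hs : ∀ (c : Fin (d+1)), (∑ j, w j * (Finsupp.single c 1 : Fin (d+1) →₀ ℕ) j) = w c := by
    intro c
    simp only [Finsupp.single_apply]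
    rw [Finset.sum_congr rfl (fun j _ => by rw [mul_ite, mul_one, mul_zero])]
    simp [Finset.sum_ite_eq]
  calc (∑ j, w j * (shiftedExp α k k') j) + w k
      = ∑ j, w j * ((shiftedExp α k k') j + (Finsupp.single k 1 : Fin (d+1) →₀ ℕ) j) := by
        simp only [mul_add, Finset.sum_add_distrib, hs]
    _ = ∑ j, w j * (α j + (Finsupp.single k' 1 : Fin (d+1) →₀ ℕ) j) :=
        Finset.sum_congr rfl (fun j _ => by rw [hpt])
    _ = (∑ j, w j * α j) + w k' := by
        simp only [mul_add, Finset.sum_add_distrib, hs]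

lemma D1_monomial_mem {i N : ℕ} {α : Fin (d+1) →₀ ℕ} (h1 : (∑ k, α k) = i)
    (h2 : (∑ k : Fin (d + 1), (k : ℕ) * α k) = N) :
    D1 d (monomial α 1) ∈ Wspace d i (N - 1) := by
  rw [D1, mkDerivation_monomial, one_smul]
  apply Submodule.sum_mem
  intro k hk
  dsimp only
  have hαk : α k ≠ 0 := Finsupp.mem_support_iff.1 hk
  by_cases hk0 : 0 < (k : ℕ)
  · rw [dif_pos hk0]
    set k' : Fin (d+1) := ⟨(k : ℕ) - 1, lt_of_le_of_lt (Nat.sub_le _ _) k.isLt⟩ with hk'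
    have h : (monomial (α - Finsupp.single k 1) ((α k : ℂ))) • (((k:ℕ):ℂ) • X k')
        = monomial (shiftedExp α k k') ((α k : ℂ) * (k:ℕ)) := by
      rw [smul_comm, smul_eq_mul, X, monomial_mul, mul_one, smul_monomial, shiftedExp]
      simp only [smul_eq_mul]
      ring_nf
    rw [h]
    have hN1 : 1 ≤ N := by
      have h3 : (k:ℕ) * α k ≤ N := h2 ▸ Finset.single_le_sum
        (f := fun j : Fin (d+1) => (j:ℕ) * α j) (fun j _ => Nat.zero_le _) (Finset.mem_univ k)
      have h4 : 1 ≤ (k:ℕ) * α k := Nat.one_le_iff_ne_zero.2 (by positivity)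
      omega
    have hd1 := shift_sum (k := k) (k' := k') hαk (fun _ => 1)
    have hw1 := shift_sum (k := k) (k' := k') hαk (fun j => (j : ℕ))
    simp only [one_mul] at hd1
    apply mono_mem_W
    · omega
    · have hk'v : (k' : ℕ) = (k : ℕ) - 1 := rfl
      rw [h2, hk'v] at hw1
      omega
  · rw [dif_neg hk0, smul_zero]
    exact Submodule.zero_mem _

lemma Fop_monomial_mem {i N : ℕ} {α : Fin (d+1) →₀ ℕ} (h1 : (∑ k, α k) = i)
    (h2 : (∑ k : Fin (d + 1), (k : ℕ) * α k) = N) :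
    Fop d (monomial α 1) ∈ Wspace d i (N + 1) := by
  rw [Fop, mkDerivation_monomial, one_smul]
  apply Submodule.sum_mem
  intro k hk
  dsimp only
  have hαk : α k ≠ 0 := Finsupp.mem_support_iff.1 hk
  by_cases hkd : (k : ℕ) < d
  · rw [dif_pos hkd]
    set k' : Fin (d+1) := ⟨(k : ℕ) + 1, by omega⟩ with hk'
    have h : (monomial (α - Finsupp.single k 1) ((α k : ℂ))) • (((d - (k:ℕ):ℕ):ℂ) • X k')
        = monomial (shiftedExp α k k') ((α k : ℂ) * ((d - (k:ℕ):ℕ):ℂ)) := by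
      rw [smul_comm, smul_eq_mul, X, monomial_mul, mul_one, smul_monomial, shiftedExp]
      simp only [smul_eq_mul]
      ring_nf
    rw [h]
    have hd1 := shift_sum (k := k) (k' := k') hαk (fun _ => 1)
    have hw1 := shift_sum (k := k) (k' := k') hαk (fun j => (j : ℕ))
    simp only [one_mul] at hd1
    apply mono_mem_W
    · omega
    · have hk'v : (k' : ℕ) = (k : ℕ) + 1 := rfl
      rw [h2, hk'v] at hw1
      omega
  · rw [dif_neg hkd, smul_zero]
    exact Submodule.zero_mem _

lemma D1_mapsTo {i N : ℕ} {v : MvPolynomial (Fin (d+1)) ℂ} (hv : v ∈ Wspace d i N) :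
    D1 d v ∈ Wspace d i (N - 1) := by
  have h : Wspace d i N ≤ Submodule.comap (D1 d).toLinearMap (Wspace d i (N-1)) := by
    rw [Wspace]
    apply Submodule.span_le.2
    rintro p ⟨α, h1, h2, rfl⟩
    exact D1_monomial_mem h1 h2
  exact h hv

lemma Fop_mapsTo {i N : ℕ} {v : MvPolynomial (Fin (d+1)) ℂ} (hv : v ∈ Wspace d i N) :
    Fop d v ∈ Wspace d i (N + 1) := by
  have h : Wspace d i N ≤ Submodule.comap (Fop d).toLinearMap (Wspace d i (N+1)) := by
    rw [Wspace]
    apply Submodule.span_le.2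
    rintro p ⟨α, h1, h2, rfl⟩
    exact Fop_monomial_mem h1 h2
  exact h hv

noncomputable def Hop (d : ℕ) :
    Derivation ℂ (MvPolynomial (Fin (d + 1)) ℂ) (MvPolynomial (Fin (d + 1)) ℂ) :=
  MvPolynomial.mkDerivation ℂ (fun k =>
    (((d : ℂ) - 2 * (k : ℕ))) • MvPolynomial.X k)

lemma bracket_eq (hd : 1 ≤ d) : ⁅D1 d, Fop d⁆ = Hop d := by
  apply MvPolynomial.derivation_ext
  intro k
  rw [Derivation.commutator_apply, Hop, mkDerivation_X]
  rw [D1, Fop]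
  simp only [mkDerivation_X]
  by_cases hkd : (k : ℕ) < d
  · rw [dif_pos hkd, Derivation.map_smul, mkDerivation_X]
    have h1 : (0 : ℕ) < ((⟨(k : ℕ) + 1, by omega⟩ : Fin (d+1)) : ℕ) := Nat.succ_pos _
    rw [dif_pos h1]
    have e1 : (⟨((⟨(k : ℕ) + 1, by omega⟩ : Fin (d+1)) : ℕ) - 1,
        lt_of_le_of_lt (Nat.sub_le _ _) (Fin.isLt _)⟩ : Fin (d+1)) = k := by
      apply Fin.ext; simp
    rw [e1]
    have hc3 : ((((⟨(k : ℕ) + 1, by omega⟩ : Fin (d+1)) : ℕ)) : ℂ) = ((k:ℕ) : ℂ) + 1 := by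
      norm_num
    have hc1 : ((d - (k:ℕ) : ℕ) : ℂ) = (d : ℂ) - ((k:ℕ) : ℂ) := by
      rw [Nat.cast_sub hkd.le]
    by_cases hk0 : 0 < (k : ℕ)
    · rw [dif_pos hk0, Derivation.map_smul, mkDerivation_X]
      have h2 : ((⟨(k : ℕ) - 1, lt_of_le_of_lt (Nat.sub_le _ _) k.isLt⟩ : Fin (d+1)) : ℕ) < d := by
        simp only []; omega
      rw [dif_pos h2]
      have e2 : (⟨((⟨(k : ℕ) - 1, lt_of_le_of_lt (Nat.sub_le _ _) k.isLt⟩ : Fin (d+1)) : ℕ) + 1,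
          by omega⟩ : Fin (d+1)) = k := by
        apply Fin.ext; simp; omega
      rw [e2]
      have hc2 : ((d - (((⟨(k : ℕ) - 1, lt_of_le_of_lt (Nat.sub_le _ _) k.isLt⟩ :
          Fin (d+1)) : ℕ)) : ℕ) : ℂ) = (d : ℂ) - ((k:ℕ) : ℂ) + 1 := by
        simp only []
        have h3 : d - ((k:ℕ) - 1) = d - (k:ℕ) + 1 := by omega
        rw [h3, Nat.cast_add, Nat.cast_sub hkd.le]; norm_num
      rw [hc2, hc3, hc1, smul_smul, smul_smul, ← sub_smul]
      congr 1
      ring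
    · rw [dif_neg hk0, Derivation.map_zero, sub_zero, hc3, hc1, smul_smul]
      have hk00 : ((k:ℕ) : ℂ) = 0 := by
        have : (k : ℕ) = 0 := by omega
        rw [this]; norm_num
      rw [hk00]
      congr 1
      ring
  · rw [dif_neg hkd]
    have hkd2 : (k : ℕ) = d := by have := k.isLt; omega
    have hk0 : 0 < (k : ℕ) := by omega
    rw [dif_pos hk0, Derivation.map_zero, zero_sub, Derivation.map_smul, mkDerivation_X]
    have h2 : ((⟨(k : ℕ) - 1, lt_of_le_of_lt (Nat.sub_le _ _) k.isLt⟩ : Fin (d+1)) : ℕ) < d := by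
      simp only []; omega
    rw [dif_pos h2]
    have e2 : (⟨((⟨(k : ℕ) - 1, lt_of_le_of_lt (Nat.sub_le _ _) k.isLt⟩ : Fin (d+1)) : ℕ) + 1,
        by omega⟩ : Fin (d+1)) = k := by
      apply Fin.ext; simp; omega
    rw [e2]
    have hc2 : ((d - (((⟨(k : ℕ) - 1, lt_of_le_of_lt (Nat.sub_le _ _) k.isLt⟩ :
        Fin (d+1)) : ℕ)) : ℕ) : ℂ) = 1 := by
      simp only []
      have h3 : d - ((k:ℕ) - 1) = 1 := by omega
      rw [h3]; norm_num
    rw [hc2, smul_smul, ← neg_smul]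
    congr 1
    rw [hkd2]
    ring


lemma Hop_monomial {i N : ℕ} {α : Fin (d+1) →₀ ℕ} (h1 : (∑ k, α k) = i)
    (h2 : (∑ k : Fin (d + 1), (k : ℕ) * α k) = N) :
    Hop d (monomial α 1) = ((d : ℂ) * i - 2 * N) • monomial α 1 := by
  rw [Hop, mkDerivation_monomial, one_smul]
  have hterm : ∀ k ∈ α.support,
      (monomial (α - Finsupp.single k 1) ((α k : ℂ))) • (((d:ℂ) - 2*(k:ℕ)) • X k)
        = (((α k : ℕ):ℂ) * ((d:ℂ) - 2*(k:ℕ))) • (monomial α 1 : MvPolynomial (Fin (d+1)) ℂ) := by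
    intro k hk
    have hle : Finsupp.single k 1 ≤ α :=
      Finsupp.single_le_iff.2 (Nat.one_le_iff_ne_zero.2 (Finsupp.mem_support_iff.1 hk))
    have hca : α - Finsupp.single k 1 + Finsupp.single k 1 = α := tsub_add_cancel_of_le hle
    rw [smul_comm, smul_eq_mul, X, monomial_mul, mul_one, hca]
    have : (monomial α ((α k : ℂ)) : MvPolynomial (Fin (d+1)) ℂ)
        = ((α k : ℕ):ℂ) • monomial α 1 := by
      rw [smul_monomial, smul_eq_mul, mul_one]
    rw [this, smul_smul]
    congr 1
    ring
  rw [Finsupp.sum, Finset.sum_congr rfl hterm, ← Finset.sum_smul]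
  congr 1
  have hext : (∑ k ∈ α.support, ((α k : ℕ):ℂ) * ((d:ℂ) - 2*(k:ℕ)))
      = ∑ k : Fin (d+1), ((α k : ℕ):ℂ) * ((d:ℂ) - 2*(k:ℕ)) := by
    apply Finset.sum_subset (Finset.subset_univ _)
    intro k _ hk
    rw [Finsupp.notMem_support_iff.1 hk]
    norm_num
  rw [hext]
  have s1 : (∑ k : Fin (d+1), ((α k : ℕ):ℂ)) = (i : ℂ) := by
    rw [← h1, Nat.cast_sum]
  have s2 : (∑ k : Fin (d+1), ((k:ℕ):ℂ) * ((α k : ℕ):ℂ)) = (N : ℂ) := by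
    rw [← h2, Nat.cast_sum]
    push_cast
    ring
  calc (∑ k : Fin (d+1), ((α k : ℕ):ℂ) * ((d:ℂ) - 2*(k:ℕ)))
      = (d:ℂ) * (∑ k : Fin (d+1), ((α k : ℕ):ℂ))
          - 2 * (∑ k : Fin (d+1), ((k:ℕ):ℂ) * ((α k : ℕ):ℂ)) := by
        rw [Finset.mul_sum, Finset.mul_sum, ← Finset.sum_sub_distrib]
        exact Finset.sum_congr rfl fun k _ => by ring
    _ = (d:ℂ) * i - 2 * N := by rw [s1, s2]

lemma Hop_on_W {i N : ℕ} {v : MvPolynomial (Fin (d+1)) ℂ} (hv : v ∈ Wspace d i N) :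
    Hop d v = ((d : ℂ) * i - 2 * N) • v := by
  have hle : Wspace d i N ≤ LinearMap.ker
      ((Hop d).toLinearMap - ((d : ℂ) * i - 2 * N) • LinearMap.id) := by
    rw [Wspace]
    apply Submodule.span_le.2
    rintro p ⟨α, h1, h2, rfl⟩
    simp only [SetLike.mem_coe, LinearMap.mem_ker, LinearMap.sub_apply, LinearMap.smul_apply,
      LinearMap.id_apply, Derivation.coeFn_coe]
    rw [Hop_monomial h1 h2, sub_self]
  have := hle hv
  simp only [LinearMap.mem_ker, LinearMap.sub_apply, LinearMap.smul_apply, LinearMap.id_apply,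
    Derivation.coeFn_coe, sub_eq_zero] at this
  exact this

lemma D1_zero_of_wt0 {i : ℕ} {v : MvPolynomial (Fin (d+1)) ℂ} (hv : v ∈ Wspace d i 0) :
    D1 d v = 0 := by
  have hle : Wspace d i 0 ≤ LinearMap.ker (D1 d).toLinearMap := by
    rw [Wspace]
    apply Submodule.span_le.2
    rintro p ⟨α, h1, h2, rfl⟩
    simp only [SetLike.mem_coe, LinearMap.mem_ker, Derivation.coeFn_coe]
    rw [D1, mkDerivation_monomial, one_smul]
    apply Finset.sum_eq_zero
    intro k hk
    dsimp only
    have hαk : α k ≠ 0 := Finsupp.mem_support_iff.1 hk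
    have hk0 : ¬ (0 < (k : ℕ)) := by
      intro h
      have h3 : (k:ℕ) * α k ≤ 0 := h2 ▸ Finset.single_le_sum
        (f := fun j : Fin (d+1) => (j:ℕ) * α j) (fun j _ => Nat.zero_le _) (Finset.mem_univ k)
      have h4 : 1 ≤ (k:ℕ) * α k := Nat.one_le_iff_ne_zero.2 (by positivity)
      omega
    rw [dif_neg hk0, smul_zero]
  exact hle hv

lemma eig (hd : 1 ≤ d) (i : ℕ) : ∀ N : ℕ, 2*N ≤ d*i + 2 →
    ∀ (lam : ℂ) (v : MvPolynomial (Fin (d+1)) ℂ), v ∈ Wspace d i N → v ≠ 0 →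
    Fop d (D1 d v) = lam • v → ∃ r : ℝ, 0 ≤ r ∧ lam = (r : ℂ) := by
  intro N
  induction N with
  | zero =>
    intro _ lam v hv hv0 heq
    rw [D1_zero_of_wt0 hv, Derivation.map_zero] at heq
    refine ⟨0, le_refl _, ?_⟩
    rcases smul_eq_zero.1 heq.symm with h | h
    · rw [h]; norm_num
    · exact absurd h hv0
  | succ M ih =>
    intro hle lam v hv hv0 heq
    have hM : 2*M ≤ d*i := by omega
    set w := D1 d v with hw
    have hwW : w ∈ Wspace d i M := by
      have := D1_mapsTo hv
      simpa using this
    by_cases hw0 : w = 0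
    · rw [hw0, Derivation.map_zero] at heq
      refine ⟨0, le_refl _, ?_⟩
      rcases smul_eq_zero.1 heq.symm with h | h
      · rw [h]; norm_num
      · exact absurd h hv0
    · -- D1 (Fop w) = lam • w
      have hEF : D1 d (Fop d w) = lam • w := by
        rw [heq, Derivation.map_smul, hw]
      have hbr := congrArg (fun (D : Derivation ℂ (MvPolynomial (Fin (d+1)) ℂ)
          (MvPolynomial (Fin (d+1)) ℂ)) => D w) (bracket_eq hd)
      simp only [Derivation.commutator_apply] at hbr
      have hH : Hop d w = ((d : ℂ) * i - 2 * M) • w := Hop_on_W hwW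
      have h5 : D1 d (Fop d w) - Fop d (D1 d w) = ((d : ℂ) * i - 2 * M) • w := hbr.trans hH
      have hFE : Fop d (D1 d w) = (lam - ((d : ℂ) * i - 2 * M)) • w := by
        rw [sub_smul, ← hEF, ← h5]
        ring
      obtain ⟨r, hr0, hreq⟩ := ih (by omega) _ w hwW hw0 hFE
      refine ⟨r + ((d*i : ℕ) : ℝ) - 2*M, by
        have : (2*M : ℝ) ≤ ((d*i : ℕ) : ℝ) := by exact_mod_cast hM
        linarith, ?_⟩
      have hc : ((d : ℂ) * i - 2 * M) = ((((d*i : ℕ) : ℝ) - 2*M : ℝ) : ℂ) := by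
        push_cast; ring
      have : lam = (r : ℂ) + ((d : ℂ) * i - 2 * M) := by
        rw [← hreq]; ring
      rw [this, hc]
      push_cast
      ring

lemma surj (hd : 1 ≤ d) {i N : ℕ} (hN : 1 ≤ N) (h2 : 2*N ≤ d*i) :
    Wspace d i (N-1) ≤ Submodule.map (D1 d).toLinearMap (Wspace d i N) := by
  set M := N - 1 with hMdef
  have hNM : M + 1 = N := by omega
  have hmaps : ∀ x ∈ Wspace d i M,
      ((D1 d).toLinearMap ∘ₗ (Fop d).toLinearMap) x ∈ Wspace d i M := by
    intro x hx
    have h1 : Fop d x ∈ Wspace d i N := hNM ▸ Fop_mapsTo hx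
    have h2 : D1 d (Fop d x) ∈ Wspace d i (N - 1) := D1_mapsTo h1
    simpa [hMdef] using h2
  set T := ((D1 d).toLinearMap ∘ₗ (Fop d).toLinearMap).restrict hmaps with hT
  have hinj : Function.Injective T := by
    rw [← LinearMap.ker_eq_bot]
    rw [Submodule.eq_bot_iff]
    rintro ⟨v, hvW⟩ hvker
    rw [LinearMap.mem_ker] at hvker
    have hEF0 : D1 d (Fop d v) = 0 := by
      have := congrArg (Subtype.val) hvker
      simpa [hT, LinearMap.restrict_apply] using this
    by_cases hv0 : v = 0
    · simp [hv0]
    · exfalso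
      have hbr := congrArg (fun (D : Derivation ℂ (MvPolynomial (Fin (d+1)) ℂ)
          (MvPolynomial (Fin (d+1)) ℂ)) => D v) (bracket_eq hd)
      simp only [Derivation.commutator_apply] at hbr
      have hH : Hop d v = ((d : ℂ) * i - 2 * M) • v := Hop_on_W hvW
      have h5 : D1 d (Fop d v) - Fop d (D1 d v) = ((d : ℂ) * i - 2 * M) • v := hbr.trans hH
      have hFE : Fop d (D1 d v) = (-(((d : ℂ) * i - 2 * M))) • v := by
        rw [neg_smul, ← h5, hEF0]
        ring
      obtain ⟨r, hr0, hreq⟩ := eig hd i M (by omega) _ v hvW hv0 hFE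
      have hcM : ((d : ℂ) * i - 2 * M) = (((d*i - 2*M : ℕ) : ℝ) : ℂ) := by
        have : ((d*i - 2*M : ℕ) : ℝ) = (d*i : ℕ) - 2*M := by
          push_cast [Nat.cast_sub (by omega : 2*M ≤ d*i)]
          ring
        rw [this]
        push_cast
        ring
      rw [hcM] at hreq
      have hn2 : 2 ≤ d*i - 2*M := by omega
      have hr' : -((d*i - 2*M : ℕ) : ℝ) = r := by exact_mod_cast hreq
      have hge : (2:ℝ) ≤ ((d*i - 2*M : ℕ) : ℝ) := by exact_mod_cast hn2
      linarith
  have hsurj : Function.Surjective T := by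
    have hd1 : Module.finrank ℂ (Wspace d i M) = Module.finrank ℂ (Wspace d i M) := rfl
    exact (LinearMap.injective_iff_surjective).1 hinj
  intro x hx
  obtain ⟨y, hy⟩ := hsurj ⟨x, hx⟩
  refine ⟨Fop d (y : MvPolynomial (Fin (d+1)) ℂ), hNM ▸ Fop_mapsTo y.2, ?_⟩
  have := congrArg Subtype.val hy
  rw [LinearMap.restrict_apply] at this
  simpa using this


end SA


open SA Module in
theorem stmt0 (d i j : ℕ) (hd : 1 ≤ d) (hj : j ≤ d * i) (hpar : (d * i - j) % 2 = 0) :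
    (Module.finrank ℂ
        ↥(Wspace d i ((d * i - j) / 2) ⊓ LinearMap.ker (D1 d).toLinearMap) : ℤ)
      = omegaCount d i (((d * i - j) / 2 : ℕ) : ℤ)
        - omegaCount d i ((((d * i - j) / 2 : ℕ) : ℤ) - 1) := by
  set N := (d * i - j) / 2 with hNdef
  have h2N : 2 * N = d * i - j := by omega
  rcases Nat.eq_zero_or_pos N with hN0 | hN1
  · rw [hN0]
    have hker : Wspace d i 0 ≤ LinearMap.ker (D1 d).toLinearMap := fun v hv =>
      LinearMap.mem_ker.2 (SA.D1_zero_of_wt0 hv)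
    rw [inf_eq_left.2 hker, SA.finrank_Wspace,
      SA.omegaCount_neg d i (show (((0:ℕ):ℤ)) - 1 < 0 by norm_num)]
    push_cast
    ring
  · have hmapsTo : ∀ x ∈ Wspace d i N, (D1 d).toLinearMap x ∈ Wspace d i (N-1) :=
      fun x hx => SA.D1_mapsTo hx
    set e := (D1 d).toLinearMap.restrict hmapsTo with he
    have hrange : LinearMap.range e = ⊤ := by
      rw [Submodule.eq_top_iff']
      rintro ⟨y, hy⟩
      obtain ⟨x, hx, hxy⟩ := SA.surj hd hN1 (by omega) hy
      exact ⟨⟨x, hx⟩, Subtype.ext (by rw [LinearMap.restrict_apply]; exact hxy)⟩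
    have hkere : LinearMap.ker e = Submodule.comap (Wspace d i N).subtype
        (Wspace d i N ⊓ LinearMap.ker (D1 d).toLinearMap) := by
      rw [he, LinearMap.ker_restrict, Submodule.comap_inf, Submodule.comap_subtype_self,
        top_inf_eq]
    have hrn := LinearMap.finrank_range_add_finrank_ker e
    rw [hrange, finrank_top] at hrn
    have hkf : finrank ℂ (LinearMap.ker e)
        = finrank ℂ ↥(Wspace d i N ⊓ LinearMap.ker (D1 d).toLinearMap) := by
      rw [hkere]
      exact (Submodule.comapSubtypeEquivOfLe inf_le_left).finrank_eq
    rw [hkf, SA.finrank_Wspace, SA.finrank_Wspace] at hrn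
    have hc : ((N:ℤ) - 1) = ((N-1:ℕ):ℤ) := by omega
    rw [hc]
    omega
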